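/- arXiv:1707.06514 — 5 statements merged into one kernel-verified Lean document; each statement's English description precedes it below -/
import Mathlib

section
/- For positive reals $a_1,\ldots,a_n$ and a positive integer $k$, let $M_k(a_1,\ldots,a_n)$ denote the $k$-th smallest element (with multiplicity) of the multiset of all positive integer multiples $m a_i$ ($m \ge 1$, $1 \le i \le n$). Then $\min\{\max_{i} a_i v_i \mid v \in \mathbb{N}^n, \sum_i v_i = k\} = M_k(a_1,\ldots,a_n)$. -/
open Finset

lemma aux_sum_split (n k : ℕ) : ∀ (d : ℕ) (m : Fin n → ℕ), (∑ i, m i) = k + d →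
    ∃ v : Fin n → ℕ, (∀ i, v i ≤ m i) ∧ ∑ i, v i = k := by
  intro d
  induction d with
  | zero => intro m hm; exact ⟨m, fun i => le_rfl, by simpa using hm⟩
  | succ d ih =>
    intro m hm
    have hex : ∃ i, 0 < m i := by
      by_contra h
      push_neg at h
      simp only [Nat.le_zero] at h
      simp [h] at hm
    obtain ⟨i, hi⟩ := hex
    have hsum : m i + ∑ j ∈ Finset.univ.erase i, m j = k + d + 1 := by
      rw [Finset.add_sum_erase _ _ (Finset.mem_univ i)]; exact hm
    obtain ⟨v, hv, hs⟩ := ih (Function.update m i (m i - 1)) (by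
      rw [Finset.sum_update_of_mem (Finset.mem_univ i)]
      rw [Finset.sdiff_singleton_eq_erase]
      omega)
    refine ⟨v, fun j => (hv j).trans ?_, hs⟩
    rcases eq_or_ne j i with rfl | hji
    · simp
    · simp [Function.update_of_ne hji]

/-- `min { max_i a_i v_i : v ∈ ℕ^n, ∑ v_i = k } = M_k(a_1,…,a_n)`,
where `M_k` is the smallest `L > 0` with `∑ ⌊L/a_i⌋ ≥ k` (the `k`-th smallest
positive integer multiple of the `a_i` with multiplicity). -/
theorem stmt0 (n : ℕ) (hn : 0 < n) (a : Fin n → ℝ) (ha : ∀ i, 0 < a i)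
    (k : ℕ) (hk : 0 < k) :
    sInf {L : ℝ | ∃ v : Fin n → ℕ, (∑ i, v i) = k ∧
        L = Finset.univ.sup' (Finset.univ_nonempty_iff.mpr ⟨⟨0, hn⟩⟩)
          (fun i => a i * (v i : ℝ))} =
      sInf {L : ℝ | 0 < L ∧ (k : ℤ) ≤ ∑ i, ⌊L / a i⌋} := by
  set ne : (Finset.univ : Finset (Fin n)).Nonempty :=
    Finset.univ_nonempty_iff.mpr ⟨⟨0, hn⟩⟩ with hne
  set T1 := {L : ℝ | ∃ v : Fin n → ℕ, (∑ i, v i) = k ∧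
        L = Finset.univ.sup' ne (fun i => a i * (v i : ℝ))} with hT1
  set T2 := {L : ℝ | 0 < L ∧ (k : ℤ) ≤ ∑ i, ⌊L / a i⌋} with hT2
  -- T1 ⊆ T2
  have hsub : T1 ⊆ T2 := by
    rintro L ⟨v, hvk, rfl⟩
    set L := Finset.univ.sup' ne (fun i => a i * (v i : ℝ)) with hL
    have hge : ∀ i, a i * (v i : ℝ) ≤ L := fun i =>
      Finset.le_sup' (fun i => a i * (v i : ℝ)) (Finset.mem_univ i)
    have hvfloor : ∀ i, (v i : ℤ) ≤ ⌊L / a i⌋ := by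
      intro i
      apply Int.le_floor.mpr
      rw [le_div_iff₀ (ha i)]
      push_cast
      linarith [hge i, mul_comm (a i) (v i : ℝ)]
    constructor
    · have h0 : ∃ i, 0 < v i := by
        by_contra h
        push_neg at h
        simp only [Nat.le_zero] at h
        simp [h] at hvk
        omega
      obtain ⟨i, hi⟩ := h0
      have hvi : (0 : ℝ) < (v i : ℝ) := by exact_mod_cast hi
      exact lt_of_lt_of_le (mul_pos (ha i) hvi) (hge i)
    · calc (k : ℤ) = ∑ i, (v i : ℤ) := by exact_mod_cast hvk.symm
        _ ≤ ∑ i, ⌊L / a i⌋ := Finset.sum_le_sum fun i _ => hvfloor i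
  -- nonemptiness of T1
  have hT1ne : T1.Nonempty := by
    refine ⟨_, ⟨fun i => if i = ⟨0, hn⟩ then k else 0, ?_, rfl⟩⟩
    simp [Finset.sum_ite_eq']
  have hT2ne : T2.Nonempty := hT1ne.mono hsub
  have hbdd2 : BddBelow T2 := ⟨0, fun L hL => le_of_lt hL.1⟩
  have hbdd1 : BddBelow T1 := ⟨0, by
    rintro L ⟨v, hvk, rfl⟩
    have h0 : (0:ℝ) ≤ a ⟨0, hn⟩ * (v ⟨0, hn⟩ : ℝ) :=
      mul_nonneg (ha _).le (Nat.cast_nonneg _)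
    exact h0.trans (Finset.le_sup' (fun i => a i * (v i : ℝ)) (Finset.mem_univ ⟨0, hn⟩))⟩
  apply le_antisymm
  · -- sInf T1 ≤ sInf T2
    apply le_csInf hT2ne
    rintro L ⟨hL0, hLk⟩
    set m : Fin n → ℕ := fun i => (⌊L / a i⌋).toNat with hm
    have hfl0 : ∀ i, 0 ≤ ⌊L / a i⌋ := fun i =>
      Int.floor_nonneg.mpr (div_nonneg hL0.le (ha i).le)
    have hksum : k ≤ ∑ i, m i := by
      have : (k : ℤ) ≤ ∑ i, ((m i : ℕ) : ℤ) := by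
        rw [hm]
        simp only [Int.toNat_of_nonneg (hfl0 _)]
        exact hLk
      exact_mod_cast this
    obtain ⟨v, hv, hs⟩ := aux_sum_split n k (∑ i, m i - k) m (by omega)
    have hmem : Finset.univ.sup' ne (fun i => a i * (v i : ℝ)) ∈ T1 := ⟨v, hs, rfl⟩
    refine (csInf_le hbdd1 hmem).trans ?_
    apply Finset.sup'_le
    intro i _
    have h2 : (v i : ℤ) ≤ ⌊L / a i⌋ := by
      have h3 : v i ≤ (⌊L / a i⌋).toNat := hv i
      have h4 := hfl0 i
      omega
    have h1 : (v i : ℝ) ≤ L / a i := by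
      have := Int.le_floor.mp h2
      exact_mod_cast this
    calc a i * (v i : ℝ) ≤ a i * (L / a i) := by
          exact mul_le_mul_of_nonneg_left h1 (ha i).le
      _ = L := by rw [mul_comm]; exact div_mul_cancel₀ L (ha i).ne'
  · exact csInf_le_csInf hbdd2 hT1ne hsub
end

section
/- For positive reals $a_1,\ldots,a_n$ and a positive integer $k$, $\max\{\min_i a_i v_i \mid v \in \mathbb{Z}_{>0}^n, \sum_i v_i = k+n-1\} = M_k(a_1,\ldots,a_n)$, where all components of $v$ are required to be positive integers. -/
open Finset

/-- `max { min_i a_i v_i : v ∈ ℤ_{>0}^n, ∑ v_i = k+n-1 } = M_k(a_1,…,a_n)`,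
where `M_k` is the smallest `L > 0` with `∑ ⌊L/a_i⌋ ≥ k`. -/
theorem stmt1 (n : ℕ) (hn : 0 < n) (a : Fin n → ℝ) (ha : ∀ i, 0 < a i)
    (k : ℕ) (hk : 0 < k) :
    sSup {L : ℝ | ∃ v : Fin n → ℕ, (∀ i, 0 < v i) ∧ (∑ i, v i) = k + n - 1 ∧
        L = Finset.univ.inf' (Finset.univ_nonempty_iff.mpr ⟨⟨0, hn⟩⟩)
          (fun i => a i * (v i : ℝ))} =
      sInf {L : ℝ | 0 < L ∧ (k : ℤ) ≤ ∑ i, ⌊L / a i⌋} := by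
  classical
  have hne : (univ : Finset (Fin n)).Nonempty := univ_nonempty_iff.mpr ⟨⟨0, hn⟩⟩
  set T : Set ℝ := {L : ℝ | 0 < L ∧ (k : ℤ) ≤ ∑ i, ⌊L / a i⌋} with hTdef
  set S : Set ℝ := {L : ℝ | ∃ v : Fin n → ℕ, (∀ i, 0 < v i) ∧ (∑ i, v i) = k + n - 1 ∧
        L = Finset.univ.inf' (Finset.univ_nonempty_iff.mpr ⟨⟨0, hn⟩⟩)
          (fun i => a i * (v i : ℝ))} with hSdef
  set M : ℝ := sInf T with hMdef
  -- T is nonempty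
  have hamax : ∀ i, a i ≤ univ.sup' hne a := fun i => le_sup' a (mem_univ i)
  have hamaxpos : 0 < univ.sup' hne a := lt_of_lt_of_le (ha ⟨0, hn⟩) (hamax ⟨0, hn⟩)
  have hTne : T.Nonempty := by
    refine ⟨k * univ.sup' hne a, by positivity, ?_⟩
    calc (k : ℤ) ≤ ∑ _i : Fin n, (k : ℤ) := by
          rw [Finset.sum_const, card_univ, Fintype.card_fin, nsmul_eq_mul]
          have h1 : (1 : ℤ) ≤ (n : ℤ) := by exact_mod_cast hn
          nlinarith [Int.ofNat_nonneg k]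
      _ ≤ ∑ i, ⌊(k * univ.sup' hne a) / a i⌋ := by
          refine Finset.sum_le_sum fun i _ => ?_
          rw [Int.le_floor]
          push_cast
          rw [le_div_iff₀ (ha i)]
          exact mul_le_mul_of_nonneg_left (hamax i) (by positivity)
  -- T is bounded below by 0
  have hTbdd : BddBelow T := ⟨0, fun t ht => ht.1.le⟩
  -- every element of T is ≥ min a i > 0
  have hTlb : ∀ t ∈ T, univ.inf' hne a ≤ t := by
    intro t ht
    obtain ⟨i, hi⟩ : ∃ i, (1 : ℤ) ≤ ⌊t / a i⌋ := by
      by_contra hcon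
      push_neg at hcon
      have hsum : (∑ i, ⌊t / a i⌋) ≤ 0 := Finset.sum_nonpos fun i _ => by
        have := hcon i; omega
      have := ht.2
      have : (0 : ℤ) < (k : ℤ) := by exact_mod_cast hk
      omega
    have hat : a i ≤ t := by
      have h1 : (1 : ℝ) ≤ t / a i := by
        have := (Int.le_floor.mp hi)
        exact_mod_cast this
      calc a i = 1 * a i := (one_mul _).symm
        _ ≤ (t / a i) * a i := by nlinarith [ha i]
        _ = t := div_mul_cancel₀ t (ha i).ne'
    exact le_trans (inf'_le a (mem_univ i)) hat
  have hMlb : univ.inf' hne a ≤ M := le_csInf hTne hTlb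
  have hMpos : 0 < M := by
    have h0 : 0 < univ.inf' hne a := by
      rw [Finset.lt_inf'_iff]; exact fun i _ => ha i
    linarith
  -- M ∈ T
  have hMmem : M ∈ T := by
    set ε : ℝ := univ.inf' hne (fun i => a i * ((⌊M / a i⌋ : ℝ) + 1) - M) with hε
    have hεle : ∀ i, ε ≤ a i * ((⌊M / a i⌋ : ℝ) + 1) - M :=
      fun i => inf'_le _ (mem_univ i)
    have hεpos : 0 < ε := by
      rw [hε, Finset.lt_inf'_iff]
      intro i _
      have h1 : M / a i < (⌊M / a i⌋ : ℝ) + 1 := Int.lt_floor_add_one _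
      have h2 : M = (M / a i) * a i := (div_mul_cancel₀ M (ha i).ne').symm
      nlinarith [ha i]
    obtain ⟨t, htT, htlt⟩ := exists_lt_of_csInf_lt hTne (by linarith : sInf T < M + ε)
    have htM : M ≤ t := csInf_le hTbdd htT
    have hfl : ∀ i, ⌊t / a i⌋ = ⌊M / a i⌋ := by
      intro i
      have h1 : ⌊M / a i⌋ ≤ ⌊t / a i⌋ :=
        Int.floor_le_floor ((div_le_div_iff_of_pos_right (ha i)).mpr htM)
      have h2 : ⌊t / a i⌋ < ⌊M / a i⌋ + 1 := by
        rw [Int.floor_lt]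
        push_cast
        rw [div_lt_iff₀ (ha i)]
        have := hεle i
        nlinarith
      omega
    refine ⟨hMpos, ?_⟩
    calc (k : ℤ) ≤ ∑ i, ⌊t / a i⌋ := htT.2
      _ = ∑ i, ⌊M / a i⌋ := Finset.sum_congr rfl fun i _ => hfl i
  -- cast helper
  have hcast : ((k + n - 1 : ℕ) : ℤ) = (k : ℤ) + n - 1 := by omega
  -- every element of S is ≤ every element of T
  have hub : ∀ s ∈ S, ∀ t ∈ T, s ≤ t := by
    rintro s ⟨v, hv, hvsum, rfl⟩ t ht
    by_contra hcon
    push_neg at hcon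
    have hkey : ∀ i, ⌊t / a i⌋ ≤ (v i : ℤ) - 1 := by
      intro i
      have h1 : t < a i * v i := lt_of_lt_of_le hcon (inf'_le _ (mem_univ i))
      have h2 : ⌊t / a i⌋ < (v i : ℤ) := by
        rw [Int.floor_lt]
        push_cast
        rw [div_lt_iff₀ (ha i)]
        linarith [mul_comm (a i) (v i : ℝ)]
      omega
    have hsum : (∑ i, ⌊t / a i⌋) ≤ (∑ i, (v i : ℤ)) - n := by
      calc (∑ i, ⌊t / a i⌋) ≤ ∑ i, ((v i : ℤ) - 1) := Finset.sum_le_sum fun i _ => hkey i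
        _ = (∑ i, (v i : ℤ)) - n := by
          rw [Finset.sum_sub_distrib, Finset.sum_const, card_univ, Fintype.card_fin]
          push_cast; ring
    have hvs : (∑ i, (v i : ℤ)) = (k : ℤ) + n - 1 := by
      rw [← Nat.cast_sum]
      rw [hvsum]
      exact hcast
    have := ht.2
    omega
  -- the key construction: M ∈ S
  have hMS : M ∈ S := by
    set w : Fin n → ℕ := fun i => (⌈M / a i⌉).toNat with hw
    have hceil_pos : ∀ i, (0 : ℤ) < ⌈M / a i⌉ := fun i =>
      Int.ceil_pos.mpr (div_pos hMpos (ha i))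
    have hwcast : ∀ i, (w i : ℤ) = ⌈M / a i⌉ := fun i =>
      Int.toNat_of_nonneg (hceil_pos i).le
    have hwpos : ∀ i, 0 < w i := fun i => by
      have := hceil_pos i; have := hwcast i; omega
    have hMle : ∀ i, M ≤ a i * (w i : ℝ) := by
      intro i
      have h1 : M / a i ≤ ((w i : ℤ) : ℝ) := by
        rw [hwcast i]; exact Int.le_ceil _
      have h2 : M / a i ≤ (w i : ℝ) := by exact_mod_cast h1
      calc M = (M / a i) * a i := (div_mul_cancel₀ M (ha i).ne').symm
        _ ≤ (w i : ℝ) * a i := by nlinarith [ha i]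
        _ = a i * (w i : ℝ) := mul_comm _ _
    -- sum of (ceil - 1) ≤ k - 1
    have hsumc : (∑ i, (⌈M / a i⌉ - 1)) ≤ (k : ℤ) - 1 := by
      by_contra hcon
      push_neg at hcon
      have hcon' : (k : ℤ) ≤ ∑ i, (⌈M / a i⌉ - 1) := by linarith
      set L : ℝ := univ.sup' hne (fun i => ((⌈M / a i⌉ - 1 : ℤ) : ℝ) * a i) with hL
      have hLlt : L < M := by
        rw [hL, Finset.sup'_lt_iff]
        intro i _
        have h1 : ((⌈M / a i⌉ : ℝ) - 1) < M / a i := by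
          have := Int.ceil_lt_add_one (M / a i)
          linarith
        have h2 : M = (M / a i) * a i := (div_mul_cancel₀ M (ha i).ne').symm
        push_cast
        nlinarith [ha i]
      have hLge : ∀ i, ((⌈M / a i⌉ - 1 : ℤ) : ℝ) * a i ≤ L :=
        fun i => le_sup' (fun i => ((⌈M / a i⌉ - 1 : ℤ) : ℝ) * a i) (mem_univ i)
      have hLpos : 0 < L := by
        obtain ⟨i, hi⟩ : ∃ i, (1 : ℤ) ≤ ⌈M / a i⌉ - 1 := by
          by_contra hc
          push_neg at hc
          have hsum : (∑ i, (⌈M / a i⌉ - 1)) ≤ 0 := Finset.sum_nonpos fun i _ => by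
            have := hc i; omega
          have : (0 : ℤ) < (k : ℤ) := by exact_mod_cast hk
          omega
        have : (1 : ℝ) * a i ≤ ((⌈M / a i⌉ - 1 : ℤ) : ℝ) * a i := by
          have h1 : (1 : ℝ) ≤ ((⌈M / a i⌉ - 1 : ℤ) : ℝ) := by exact_mod_cast hi
          nlinarith [ha i]
        have := hLge i
        nlinarith [ha i]
      have hLT : L ∈ T := by
        refine ⟨hLpos, ?_⟩
        calc (k : ℤ) ≤ ∑ i, (⌈M / a i⌉ - 1) := hcon'
          _ ≤ ∑ i, ⌊L / a i⌋ := by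
            refine Finset.sum_le_sum fun i _ => ?_
            rw [Int.le_floor, le_div_iff₀ (ha i)]
            exact hLge i
      have := csInf_le hTbdd hLT
      linarith
    -- there is an index where M is an exact multiple
    obtain ⟨j, hj⟩ : ∃ j, ⌈M / a j⌉ - 1 < ⌊M / a j⌋ := by
      by_contra hc
      push_neg at hc
      have h1 : (∑ i, ⌊M / a i⌋) ≤ ∑ i, (⌈M / a i⌉ - 1) :=
        Finset.sum_le_sum fun i _ => hc i
      have h2 := hMmem.2
      omega
    have hjeq : a j * (w j : ℝ) = M := by
      have hle : (⌈M / a j⌉ : ℝ) ≤ M / a j := by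
        have h1 : ⌈M / a j⌉ ≤ ⌊M / a j⌋ := by omega
        calc (⌈M / a j⌉ : ℝ) ≤ (⌊M / a j⌋ : ℝ) := by exact_mod_cast h1
          _ ≤ M / a j := Int.floor_le _
      have heq : ((w j : ℤ) : ℝ) = M / a j := by
        rw [hwcast j]
        exact le_antisymm hle (Int.le_ceil _)
      have : (w j : ℝ) = M / a j := by exact_mod_cast heq
      rw [this, mul_div_cancel₀ M (ha j).ne']
    -- sum of w ≤ k + n - 1
    have hwsumle : (∑ i, w i) ≤ k + n - 1 := by
      have h1 : ((∑ i, w i : ℕ) : ℤ) = ∑ i, ⌈M / a i⌉ := by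
        rw [Nat.cast_sum]
        exact Finset.sum_congr rfl fun i _ => hwcast i
      have h2 : (∑ i, (⌈M / a i⌉ - 1)) = (∑ i, ⌈M / a i⌉) - n := by
        rw [Finset.sum_sub_distrib, Finset.sum_const, card_univ, Fintype.card_fin]
        push_cast; ring
      have h3 : ((∑ i, w i : ℕ) : ℤ) ≤ ((k + n - 1 : ℕ) : ℤ) := by
        rw [h1, hcast]; omega
      exact_mod_cast h3
    set d : ℕ := (k + n - 1) - (∑ i, w i) with hd
    by_cases hd0 : d = 0
    · -- use w directly
      refine ⟨w, hwpos, by omega, ?_⟩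
      refine le_antisymm (le_inf' _ _ fun i _ => hMle i) ?_
      calc univ.inf' _ (fun i => a i * (w i : ℝ)) ≤ a j * (w j : ℝ) :=
            inf'_le _ (mem_univ j)
        _ = M := hjeq
    · -- need a second index
      have hn2 : 2 ≤ n := by
        by_contra hc
        push_neg at hc
        have hall : ∀ i : Fin n, i = j := fun i => Fin.ext (by
          have h1 := i.isLt; have h2 := j.isLt; omega)
        have huniv : (univ : Finset (Fin n)) = {j} :=
          Finset.eq_singleton_iff_unique_mem.mpr ⟨mem_univ j, fun i _ => hall i⟩
        have h1 : (∑ i, ⌊M / a i⌋) = ⌊M / a j⌋ := by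
          rw [huniv, Finset.sum_singleton]
        have h2 : (∑ i, w i) = w j := by
          rw [huniv, Finset.sum_singleton]
        have h3 : (k : ℤ) ≤ ⌊M / a j⌋ := h1 ▸ hMmem.2
        have hfc : ⌊M / a j⌋ ≤ ⌈M / a j⌉ := Int.floor_le_ceil _
        have h4 : (k : ℤ) ≤ (w j : ℤ) := by
          rw [hwcast j]; omega
        have h5 : k ≤ w j := by exact_mod_cast h4
        have h6 : k ≤ ∑ i, w i := h2 ▸ h5
        exact hd0 (by rw [hd]; omega)
      haveI : Nontrivial (Fin n) := Fin.nontrivial_iff_two_le.mpr hn2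
      obtain ⟨i₀, hi₀⟩ := exists_ne j
      set v : Fin n → ℕ := fun i => w i + if i = i₀ then d else 0 with hv
      have hvj : v j = w j := by simp [hv, hi₀.symm]
      have hvw : ∀ i, w i ≤ v i := fun i => Nat.le_add_right _ _
      refine ⟨v, fun i => lt_of_lt_of_le (hwpos i) (hvw i), ?_, ?_⟩
      · rw [hv]
        rw [Finset.sum_add_distrib, Finset.sum_ite_eq' univ i₀ (fun _ => d)]
        simp only [mem_univ, if_true]
        omega
      · refine le_antisymm (le_inf' _ _ fun i _ => ?_) ?_
        · calc M ≤ a i * (w i : ℝ) := hMle i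
            _ ≤ a i * (v i : ℝ) := by
              have := hvw i
              have h1 : (w i : ℝ) ≤ (v i : ℝ) := by exact_mod_cast this
              nlinarith [ha i]
        · calc univ.inf' _ (fun i => a i * (v i : ℝ)) ≤ a j * (v j : ℝ) :=
              inf'_le _ (mem_univ j)
            _ = M := by rw [hvj]; exact hjeq
  -- conclude
  have hSbdd : BddAbove S := ⟨M, fun s hs => hub s hs M hMmem⟩
  exact le_antisymm (csSup_le ⟨M, hMS⟩ fun s hs => hub s hs M hMmem) (le_csSup hSbdd hMS)
end

section
/- Suppose functions $c_k$ ($k \ge 1$) on star-shaped domains in $\mathbb{R}^{2n}$ satisfy monotonicity under inclusion and $c_k(E(a_1,\ldots,a_n)) = M_k(a_1,\ldots,a_n)$ for ellipsoids. Let $\Omega \subset \mathbb{R}^n_{\ge 0}$ be compact convex (as a toric moment image of a convex toric domain $X_\Omega$) and $v \in \mathbb{Z}_{>0}^n$ with $\sum_i v_i = k$ and $L = \|v\|^*_\Omega$. Then $\Omega \subset \Omega' := \{x \in \mathbb{R}^n_{\ge 0} : \langle v, x \rangle \le L\}$, the toric domain $X_{\Omega'}$ is the ellipsoid $E(L/v_1,\ldots,L/v_n)$,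 and $c_k(X_{\Omega'}) = L$; hence $c_k(X_\Omega) \le \|v\|^*_\Omega$. -/
open Finset

/-- `M_k(a_1,…,a_n)`: the least `L > 0` with `∑ ⌊L/a_i⌋ ≥ k` (equivalently, the
`k`-th smallest positive integer multiple of the `a_i`, with multiplicity). -/
noncomputable def Mcap (n : ℕ) (a : Fin n → ℝ) (k : ℕ) : ℝ :=
  sInf {L : ℝ | 0 < L ∧ (k : ℤ) ≤ ∑ i, ⌊L / a i⌋}

/-- The ellipsoid `E(a_1,…,a_n) = {z ∈ ℂ^n : ∑ π|z_i|²/a_i ≤ 1}`. -/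
noncomputable def ellipsoid (n : ℕ) (a : Fin n → ℝ) : Set (Fin n → ℂ) :=
  {z | ∑ i, Real.pi * ‖z i‖ ^ 2 / a i ≤ 1}

/-- The toric domain `X_Ω = μ⁻¹(Ω)` where `μ(z) = π(|z_1|²,…,|z_n|²)`. -/
noncomputable def toricDomain (n : ℕ) (Ω : Set (Fin n → ℝ)) : Set (Fin n → ℂ) :=
  {z | (fun i => Real.pi * ‖z i‖ ^ 2) ∈ Ω}

/-- if the `c_k` are monotone under inclusion and equal `M_k` on
ellipsoids, and `Ω` is a compact convex moment image with `v ∈ ℤ_{>0}^n`,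
`∑ v_i = k` and `L = ‖v‖*_Ω`, then `Ω ⊆ Ω' = {x ≥ 0 : ⟨v,x⟩ ≤ L}`, the toric
domain `X_{Ω'}` is the ellipsoid `E(L/v_1,…,L/v_n)`, `c_k` of that ellipsoid is
`L`, and hence `c_k(X_Ω) ≤ ‖v‖*_Ω`. -/
theorem stmt9 (n : ℕ) (hn : 0 < n)
    (c : ℕ → Set (Fin n → ℂ) → ℝ)
    (hmono : ∀ (k : ℕ) (X X' : Set (Fin n → ℂ)), X ⊆ X' → c k X ≤ c k X')
    (hell : ∀ (k : ℕ) (a : Fin n → ℝ), (∀ i, 0 < a i) →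
        c k (ellipsoid n a) = Mcap n a k)
    (Ω : Set (Fin n → ℝ)) (hΩne : Ω.Nonempty) (hΩc : IsCompact Ω)
    (hΩconv : Convex ℝ Ω) (hΩpos : ∀ w ∈ Ω, ∀ i, 0 ≤ w i)
    (k : ℕ) (hk : 0 < k)
    (v : Fin n → ℕ) (hv : ∀ i, 0 < v i) (hsum : ∑ i, v i = k)
    (L : ℝ) (hLpos : 0 < L)
    (hL : IsGreatest {t : ℝ | ∃ w ∈ Ω, t = ∑ i, (v i : ℝ) * w i} L) :
    Ω ⊆ {x | (∀ i, 0 ≤ x i) ∧ ∑ i, (v i : ℝ) * x i ≤ L} ∧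
    toricDomain n {x | (∀ i, 0 ≤ x i) ∧ ∑ i, (v i : ℝ) * x i ≤ L} =
      ellipsoid n (fun i => L / (v i : ℝ)) ∧
    c k (ellipsoid n (fun i => L / (v i : ℝ))) = L ∧
    c k (toricDomain n Ω) ≤ L := by
  have hvpos : ∀ i, (0:ℝ) < (v i : ℝ) := fun i => by exact_mod_cast hv i
  have hsub : Ω ⊆ {x | (∀ i, 0 ≤ x i) ∧ ∑ i, (v i : ℝ) * x i ≤ L} := by
    intro w hw
    exact ⟨hΩpos w hw, hL.2 ⟨w, hw, rfl⟩⟩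
  have keysum : ∀ z : Fin n → ℂ,
      ∑ i, Real.pi * ‖z i‖ ^ 2 / (L / (v i : ℝ)) =
        (∑ i, (v i : ℝ) * (Real.pi * ‖z i‖ ^ 2)) / L := by
    intro z
    rw [Finset.sum_div]
    refine Finset.sum_congr rfl fun i _ => ?_
    rw [div_div_eq_mul_div]; ring
  have heq : toricDomain n {x | (∀ i, 0 ≤ x i) ∧ ∑ i, (v i : ℝ) * x i ≤ L} =
      ellipsoid n (fun i => L / (v i : ℝ)) := by
    ext z
    simp only [toricDomain, ellipsoid, Set.mem_setOf_eq, keysum z]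
    constructor
    · rintro ⟨-, h⟩
      rw [div_le_one hLpos]; exact h
    · intro h
      exact ⟨fun i => by positivity, (div_le_one hLpos).mp h⟩
  have hM : Mcap n (fun i => L / (v i : ℝ)) k = L := by
    have hdiv : ∀ i, L / (L / (v i : ℝ)) = (v i : ℝ) := by
      intro i
      rw [div_div_eq_mul_div, mul_comm, mul_div_assoc, div_self hLpos.ne',
        mul_one]
    have hmem : L ∈ {L' : ℝ | 0 < L' ∧ (k : ℤ) ≤ ∑ i, ⌊L' / (L / (v i : ℝ))⌋} := by
      refine ⟨hLpos, le_of_eq ?_⟩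
      have : ∀ i, ⌊L / (L / (v i : ℝ))⌋ = (v i : ℤ) := by
        intro i; rw [hdiv i]; exact_mod_cast Int.floor_natCast (v i)
      rw [Finset.sum_congr rfl fun i _ => this i]
      exact_mod_cast hsum.symm
    have hlb : ∀ L' ∈ {L' : ℝ | 0 < L' ∧ (k : ℤ) ≤ ∑ i, ⌊L' / (L / (v i : ℝ))⌋},
        L ≤ L' := by
      rintro L' ⟨hL'pos, hL'⟩
      by_contra hlt
      push_neg at hlt
      have hfl : ∀ i, ⌊L' / (L / (v i : ℝ))⌋ ≤ (v i : ℤ) - 1 := by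
        intro i
        have h1 : L' / (L / (v i : ℝ)) < (v i : ℝ) := by
          rw [div_lt_iff₀ (div_pos hLpos (hvpos i)), mul_comm,
            div_mul_cancel₀ L (hvpos i).ne']
          exact hlt
        have := Int.floor_lt.mpr (by exact_mod_cast h1)
        omega
      have hsum' : ∑ i, ⌊L' / (L / (v i : ℝ))⌋ ≤ (k : ℤ) - n := by
        calc ∑ i, ⌊L' / (L / (v i : ℝ))⌋ ≤ ∑ i, ((v i : ℤ) - 1) :=
              Finset.sum_le_sum fun i _ => hfl i
          _ = (k : ℤ) - n := by
              rw [Finset.sum_sub_distrib]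
              simp [← hsum]
      have : (n : ℤ) ≤ 0 := by omega
      exact absurd this (by exact_mod_cast Nat.not_le.mpr hn)
    refine le_antisymm (csInf_le ⟨L, hlb⟩ hmem) (le_csInf ⟨L, hmem⟩ hlb)
  have hc : c k (ellipsoid n (fun i => L / (v i : ℝ))) = L := by
    rw [hell k _ (fun i => div_pos hLpos (hvpos i)), hM]
  refine ⟨hsub, heq, hc, ?_⟩
  calc c k (toricDomain n Ω)
      ≤ c k (toricDomain n {x | (∀ i, 0 ≤ x i) ∧ ∑ i, (v i : ℝ) * x i ≤ L}) :=
        hmono k _ _ (fun z hz => hsub hz)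
    _ = L := by rw [heq, hc]
end

section
/- Let $\Omega \subset \mathbb{R}^n_{\ge 0}$ be such that $\widehat{\Omega} = \{x \in \mathbb{R}^n : (|x_1|,\ldots,|x_n|) \in \Omega\}$ is compact and convex (a convex toric moment image), and suppose $(\delta,\ldots,\delta) \in \Omega$ with $\delta$ maximal. Then $\{x \in \mathbb{R}^n_{\ge 0} : x_i \le \delta \ \forall i\} \subset \Omega \subset \{x \in \mathbb{R}^n_{\ge 0} : \min_i x_i \le \delta\}$. -/
/-- if `Ω ⊆ ℝ^n_{≥0}` is such that
`Ω̂ = {x ∈ ℝ^n : (|x_1|,…,|x_n|) ∈ Ω}` is compact and convex (a convex toric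
moment image), and `(δ,…,δ) ∈ Ω` with `δ` maximal, then
`{x : 0 ≤ x_i ≤ δ} ⊆ Ω ⊆ {x ≥ 0 : min_i x_i ≤ δ}`. -/
theorem stmt16 (n : ℕ) (hn : 0 < n) (Ω : Set (Fin n → ℝ))
    (hΩ : Ω ⊆ {x | ∀ i, 0 ≤ x i})
    (hc : IsCompact {x : Fin n → ℝ | (fun i => |x i|) ∈ Ω})
    (hconv : Convex ℝ {x : Fin n → ℝ | (fun i => |x i|) ∈ Ω})
    (δ : ℝ) (hδ : 0 < δ) (hmem : (fun _ => δ) ∈ Ω)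
    (hmax : ∀ δ' : ℝ, δ < δ' → (fun _ : Fin n => δ') ∉ Ω) :
    {x : Fin n → ℝ | ∀ i, 0 ≤ x i ∧ x i ≤ δ} ⊆ Ω ∧
    Ω ⊆ {x | ∃ i, x i ≤ δ} := by
  set S : Set (Fin n → ℝ) := {x : Fin n → ℝ | (fun i => |x i|) ∈ Ω} with hS
  -- key: updating one coordinate to something of smaller absolute value stays in S
  have key : ∀ z ∈ S, ∀ (i : Fin n) (c : ℝ), |c| ≤ |z i| → Function.update z i c ∈ S := by
    intro z hz i c hci
    by_cases ha : z i = 0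
    · have hc0 : c = 0 := by
        rw [ha, abs_zero] at hci
        exact abs_nonpos_iff.mp hci
      rw [hc0, ← ha, Function.update_eq_self]
      exact hz
    · set a := z i with haa
      have hflip : Function.update z i (-a) ∈ S := by
        have : (fun j => |Function.update z i (-a) j|) = fun j => |z j| := by
          funext j
          by_cases h : j = i
          · subst h; simp [abs_neg]; rfl
          · simp [Function.update_of_ne h]
        show (fun j => |Function.update z i (-a) j|) ∈ Ω
        rw [this]; exact hz
      set t := (c / a + 1) / 2 with ht
      have habs : |c / a| ≤ 1 := by
        rw [abs_div]
        rw [div_le_one (abs_pos.mpr ha)]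
        exact hci
      obtain ⟨h1, h2⟩ := abs_le.mp habs
      have ht0 : 0 ≤ t := by rw [ht]; linarith
      have ht1 : 0 ≤ 1 - t := by rw [ht]; linarith
      have hmem' := hconv hz hflip ht0 ht1 (by ring)
      have heq : Function.update z i c = t • z + (1 - t) • Function.update z i (-a) := by
        funext j
        by_cases h : j = i
        · subst h
          simp only [Function.update_self, Pi.add_apply, Pi.smul_apply, smul_eq_mul]
          rw [← haa, ht]
          field_simp
          ring
        · simp only [Function.update_of_ne h, Pi.add_apply, Pi.smul_apply, smul_eq_mul]
          ring
      rw [heq]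
      exact hmem'
  -- domination lemma: if z ∈ S and |y i| ≤ |z i| for all i, then y ∈ S
  have dom : ∀ (y z : Fin n → ℝ), z ∈ S → (∀ i, |y i| ≤ |z i|) → y ∈ S := by
    intro y z hz hyz
    have step : ∀ k, k ≤ n → (fun i : Fin n => if i.val < k then y i else z i) ∈ S := by
      intro k
      induction k with
      | zero =>
        intro _
        simpa using hz
      | succ k ih =>
        intro hk
        have hkn : k < n := hk
        have hgk := ih (le_of_lt hkn)
        have hcur := key _ hgk ⟨k, hkn⟩ (y ⟨k, hkn⟩)
          (by simp only []; rw [if_neg (lt_irrefl k)]; exact hyz ⟨k, hkn⟩)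
        have heq : Function.update (fun i : Fin n => if i.val < k then y i else z i)
            ⟨k, hkn⟩ (y ⟨k, hkn⟩) = fun i : Fin n => if i.val < k + 1 then y i else z i := by
          funext j
          by_cases h : j = ⟨k, hkn⟩
          · subst h
            rw [Function.update_self, if_pos (Nat.lt_succ_self k)]
          · have hjk : j.val ≠ k := fun hh => h (Fin.ext hh)
            rw [Function.update_of_ne h]
            show (if j.val < k then y j else z j) = _
            by_cases h2 : j.val < k
            · rw [if_pos h2, if_pos (Nat.lt_succ_of_lt h2)]
            · rw [if_neg h2, if_neg (by omega)]
        rw [heq] at hcur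
        exact hcur
    have := step n le_rfl
    have heq : (fun i : Fin n => if i.val < n then y i else z i) = y := by
      funext i; rw [if_pos i.isLt]
    rwa [heq] at this
  have hδS : (fun _ : Fin n => δ) ∈ S := by
    show (fun i : Fin n => |δ|) ∈ Ω
    simpa [abs_of_pos hδ] using hmem
  constructor
  · intro x hx
    have hx' : ∀ i, 0 ≤ x i ∧ x i ≤ δ := hx
    have hxS : x ∈ S := dom x (fun _ => δ) hδS (fun i => by
      rw [abs_of_nonneg (hx' i).1, abs_of_pos hδ]; exact (hx' i).2)
    have : (fun i => |x i|) ∈ Ω := hxS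
    have heq : (fun i => |x i|) = x := by
      funext i; exact abs_of_nonneg (hx' i).1
    rwa [heq] at this
  · intro x hx
    by_contra hcon
    simp only [Set.mem_setOf_eq, not_exists, not_le] at hcon
    have hx0 : ∀ i, 0 ≤ x i := hΩ hx
    have hxS : x ∈ S := by
      show (fun i => |x i|) ∈ Ω
      have heq : (fun i => |x i|) = x := by
        funext i; exact abs_of_nonneg (hx0 i)
      rwa [heq]
    have hne : (Finset.univ : Finset (Fin n)).Nonempty := ⟨⟨0, hn⟩, Finset.mem_univ _⟩
    set m := Finset.univ.inf' hne x with hm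
    have hmle : ∀ i, m ≤ x i := fun i => Finset.inf'_le x (Finset.mem_univ i)
    have hδm : δ < m := by
      rw [hm, Finset.lt_inf'_iff]
      intro i _
      exact hcon i
    have hmS : (fun _ : Fin n => m) ∈ S := dom _ x hxS (fun i => by
      rw [abs_of_nonneg (le_of_lt (lt_trans hδ hδm)), abs_of_nonneg (hx0 i)]
      exact hmle i)
    have : (fun _ : Fin n => |m|) ∈ Ω := hmS
    have heq : (fun _ : Fin n => |m|) = fun _ : Fin n => m := by
      funext _; exact abs_of_nonneg (le_of_lt (lt_trans hδ hδm))
    rw [heq] at this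
    exact hmax m hδm this
end

section
/- Suppose functions $c_k$ on star-shaped domains in $\mathbb{R}^{2n}$ satisfy monotonicity under inclusion and $c_k(E(a_1,\ldots,a_n)) = M_k(a_1,\ldots,a_n)$. Let $\Omega \subset \mathbb{R}^n_{\ge 0}$ be the moment image of a concave toric domain with $\Sigma$ the closure of $\partial\Omega \cap \mathbb{R}^n_{>0}$, and let $v \in \mathbb{Z}_{>0}^n$ with $\sum_i v_i = k+n-1$ and $L = [v]_\Omega := \min\{\langle v,w\rangle : w \in \Sigma\}$. Then the simplex $\Omega' = \{x \in \mathbb{R}^n_{\ge 0} : \langle v, x\rangle \le L\}$ satisfies $\Omega' \subset \Omega$, and $c_k(E(L/v_1,\ldots,L/v_n)) = L$; hence $c_k(X_\Omega) \ge [v]_\Omega$. -/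
open Finset

/-- if the `c_k` are monotone under inclusion and equal `M_k` on
ellipsoids, `Ω` is the moment image of a concave toric domain (compact, with
convex complement in the orthant), `Σ` the closure of `∂Ω ∩ ℝ^n_{>0}`,
`v ∈ ℤ_{>0}^n` with `∑ v_i = k+n-1`, and `L = [v]_Ω = min {⟨v,w⟩ : w ∈ Σ}`,
then the simplex `Ω' = {x ≥ 0 : ⟨v,x⟩ ≤ L}` satisfies `Ω' ⊆ Ω`, the capacity
`c_k(E(L/v_1,…,L/v_n)) = L`, and hence `c_k(X_Ω) ≥ [v]_Ω`. -/
theorem stmt17 (n : ℕ) (hn : 0 < n)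
    (c : ℕ → Set (Fin n → ℂ) → ℝ)
    (hmono : ∀ (k : ℕ) (X X' : Set (Fin n → ℂ)), X ⊆ X' → c k X ≤ c k X')
    (hell : ∀ (k : ℕ) (a : Fin n → ℝ), (∀ i, 0 < a i) →
        c k (ellipsoid n a) = Mcap n a k)
    (Ω : Set (Fin n → ℝ)) (hΩc : IsCompact Ω) (hΩpos : ∀ w ∈ Ω, ∀ i, 0 ≤ w i)
    (hconc : Convex ℝ ({x : Fin n → ℝ | ∀ i, 0 ≤ x i} \ Ω))
    (k : ℕ) (hk : 0 < k)
    (v : Fin n → ℕ) (hv : ∀ i, 0 < v i) (hsum : ∑ i, v i = k + n - 1)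
    (L : ℝ) (hLpos : 0 < L)
    (hL : IsLeast {t : ℝ | ∃ w ∈ closure (frontier Ω ∩ {x | ∀ i, 0 < x i}),
        t = ∑ i, (v i : ℝ) * w i} L) :
    {x : Fin n → ℝ | (∀ i, 0 ≤ x i) ∧ ∑ i, (v i : ℝ) * x i ≤ L} ⊆ Ω ∧
    c k (ellipsoid n (fun i => L / (v i : ℝ))) = L ∧
    L ≤ c k (toricDomain n Ω) := by
  classical
  have hvpos : ∀ i, (0:ℝ) < v i := fun i => by exact_mod_cast hv i
  have hΩclosed : IsClosed Ω := hΩc.isClosed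
  obtain ⟨hLmem, hLlb⟩ := hL
  obtain ⟨w, hwcl, hwval⟩ := hLmem
  have hSigNe : (frontier Ω ∩ {x : Fin n → ℝ | ∀ i, 0 < x i}).Nonempty := by
    rcases Set.eq_empty_or_nonempty (frontier Ω ∩ {x : Fin n → ℝ | ∀ i, 0 < x i}) with h | h
    · rw [h, closure_empty] at hwcl; exact absurd hwcl (Set.notMem_empty w)
    · exact h
  obtain ⟨w₀, hw₀F, hw₀pos'⟩ := hSigNe
  have hw₀pos : ∀ i, 0 < w₀ i := hw₀pos'
  have hw₀Ω : w₀ ∈ Ω := hΩclosed.frontier_subset hw₀F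
  have hw₀ne : w₀ ≠ 0 := by
    intro h
    exact absurd (congrFun h ⟨0, hn⟩) (hw₀pos ⟨0, hn⟩).ne'
  have hfront_lb : ∀ u : Fin n → ℝ, u ∈ frontier Ω → (∀ i, 0 < u i) →
      L ≤ ∑ i, (v i : ℝ) * u i :=
    fun u hu hup => hLlb ⟨u, subset_closure ⟨hu, hup⟩, rfl⟩
  obtain ⟨R, hR⟩ : ∃ R : ℝ, ∀ y ∈ Ω, ‖y‖ ≤ R := by
    obtain ⟨R, hR⟩ := hΩc.isBounded.exists_norm_le
    exact ⟨R, hR⟩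
  have hR0 : 0 ≤ R := le_trans (norm_nonneg w₀) (hR w₀ hw₀Ω)
  set C : Set (Fin n → ℝ) := {x : Fin n → ℝ | ∀ i, 0 ≤ x i} \ Ω with hCdef
  have hCsub : C ⊆ Ωᶜ := fun y hy => hy.2
  -- ray lemma: beyond an excluded point on a nonnegative ray, all points are excluded
  have hray : ∀ (y : Fin n → ℝ), (∀ i, 0 ≤ y i) → y ≠ 0 →
      ∀ s t : ℝ, 0 ≤ s → s ≤ t → s • y ∉ Ω → t • y ∉ Ω := by
    intro y hy hy0 s t hs hst hsΩ htΩ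
    have hyn : 0 < ‖y‖ := norm_pos_iff.mpr hy0
    rcases eq_or_lt_of_le hst with rfl | hst'
    · exact hsΩ htΩ
    set T : ℝ := max (t + 1) ((R + 1) / ‖y‖) with hT
    have hTt : t < T := lt_of_lt_of_le (lt_add_one t) (le_max_left _ _)
    have hTy : T • y ∉ Ω := by
      intro hmem
      have h1 : ‖T • y‖ ≤ R := hR _ hmem
      have h2 : (R + 1) / ‖y‖ ≤ T := le_max_right _ _
      have h3 : R + 1 ≤ T * ‖y‖ := (div_le_iff₀ hyn).mp h2
      rw [norm_smul, Real.norm_eq_abs,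
        abs_of_nonneg (le_trans (div_nonneg (by linarith) hyn.le) h2)] at h1
      linarith
    have hsT : s < T := lt_of_le_of_lt hst hTt
    have ha : 0 ≤ (T - t) / (T - s) := div_nonneg (by linarith) (by linarith)
    have hb : 0 ≤ (t - s) / (T - s) := div_nonneg (by linarith) (by linarith)
    have hTs : T - s ≠ 0 := sub_ne_zero.mpr hsT.ne'
    have hab : (T - t) / (T - s) + (t - s) / (T - s) = 1 := by
      rw [← add_div]
      field_simp
      ring
    have m1 : s • y ∈ C := by
      refine ⟨fun i => ?_, hsΩ⟩
      simpa [smul_eq_mul] using mul_nonneg hs (hy i)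
    have m2 : T • y ∈ C := by
      refine ⟨fun i => ?_, hTy⟩
      have hT0 : (0:ℝ) ≤ T := le_trans (le_of_lt (lt_of_le_of_lt hs hsT)) le_rfl
      simpa [smul_eq_mul] using mul_nonneg hT0 (hy i)
    have hcomb := hconc m1 m2 ha hb hab
    have heq : ((T - t) / (T - s)) • (s • y) + ((t - s) / (T - s)) • (T • y) = t • y := by
      rw [smul_smul, smul_smul, ← add_smul]
      congr 1
      field_simp [hTs]
      ring
    rw [heq] at hcomb
    exact hcomb.2 htΩ
  have h0Ω : (0 : Fin n → ℝ) ∈ Ω := by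
    by_contra h0
    have h1 : (1:ℝ) • w₀ ∉ Ω :=
      hray w₀ (fun i => (hw₀pos i).le) hw₀ne 0 1 le_rfl zero_le_one (by simpa using h0)
    rw [one_smul] at h1
    exact h1 hw₀Ω
  -- key geometric step
  have key : ∀ x : Fin n → ℝ, (∀ i, 0 < x i) → (∑ i, (v i:ℝ) * x i) < L → x ∈ Ω := by
    intro x hx hxL
    by_contra hxΩ
    have hxne : x ≠ 0 := by
      intro h
      exact absurd (congrFun h ⟨0, hn⟩) (hx ⟨0, hn⟩).ne'
    set A : Set ℝ := {s : ℝ | 0 ≤ s ∧ s • x ∈ Ω} with hA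
    have hA0 : (0:ℝ) ∈ A := ⟨le_rfl, by simpa using h0Ω⟩
    have hAbdd : BddAbove A := by
      refine ⟨R / ‖x‖, fun s hs => ?_⟩
      have h1 : ‖s • x‖ ≤ R := hR _ hs.2
      rw [norm_smul, Real.norm_eq_abs, abs_of_nonneg hs.1] at h1
      exact (le_div_iff₀ (norm_pos_iff.mpr hxne)).mpr h1
    have hAcl : IsClosed A := by
      have heq : A = Set.Ici (0:ℝ) ∩ (fun s : ℝ => s • x) ⁻¹' Ω := by
        ext s; simp [hA, Set.mem_Ici]
      rw [heq]
      exact isClosed_Ici.inter (hΩclosed.preimage (continuous_id.smul continuous_const))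
    set σ := sSup A with hσdef
    have hσA : σ ∈ A := hAcl.csSup_mem ⟨0, hA0⟩ hAbdd
    have hout : ∀ s : ℝ, σ < s → s • x ∉ Ω := by
      intro s hsσ hmem
      exact absurd (le_csSup hAbdd ⟨le_trans hσA.1 hsσ.le, hmem⟩) (not_le.mpr hsσ)
    have hσ1 : σ < 1 := by
      by_contra h
      push_neg at h
      exact hray x (fun i => (hx i).le) hxne 1 σ zero_le_one h (by simpa using hxΩ) hσA.2
    have hS0 : 0 ≤ ∑ i, (v i:ℝ) * x i :=
      Finset.sum_nonneg fun i _ => mul_nonneg (Nat.cast_nonneg _) (hx i).le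
    rcases hσA.1.eq_or_lt with hσ0 | hσpos
    · -- σ = 0 : the whole open ray through x avoids Ω
      have houtx : ∀ s : ℝ, 0 < s → s • x ∉ Ω := fun s hs => hout s (hσ0 ▸ hs)
      set B := ∑ i, (v i:ℝ) * w₀ i with hB
      have hBpos : 0 < B :=
        Finset.sum_pos (fun i _ => mul_pos (hvpos i) (hw₀pos i)) ⟨⟨0, hn⟩, Finset.mem_univ _⟩
      set ρ := min (1/2 : ℝ) (L / (2*B)) with hρdef
      have hρpos : 0 < ρ := lt_min (by norm_num) (by positivity)
      have hρ1 : ρ < 1 := lt_of_le_of_lt (min_le_left _ _) (by norm_num)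
      have hρΩ : ρ • w₀ ∈ Ω := by
        by_contra h
        have := hray w₀ (fun i => (hw₀pos i).le) hw₀ne ρ 1 hρpos.le hρ1.le h
        rw [one_smul] at this
        exact this hw₀Ω
      set τ := max 2 ((R+1)/‖w₀‖) with hτdef
      have hτ2 : (2:ℝ) ≤ τ := le_max_left _ _
      have hτpos : (0:ℝ) < τ := by linarith
      have hτΩ : τ • w₀ ∉ Ω := by
        intro hmem
        have h1 := hR _ hmem
        rw [norm_smul, Real.norm_eq_abs, abs_of_nonneg hτpos.le] at h1
        have h2 : (R+1)/‖w₀‖ ≤ τ := le_max_right _ _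
        have h3 : R + 1 ≤ τ * ‖w₀‖ := (div_le_iff₀ (norm_pos_iff.mpr hw₀ne)).mp h2
        linarith
      have hρτ : ρ / τ ≤ 1 := by
        rw [div_le_one hτpos]; linarith
      have hρτ0 : 0 ≤ ρ / τ := div_nonneg hρpos.le hτpos.le
      have hzcl : ρ • w₀ ∈ closure Ωᶜ := by
        apply mem_closure_of_tendsto (f := fun s : ℝ => (1 - ρ/τ) • (s • x) + (ρ/τ) • (τ • w₀))
          (b := nhdsWithin 0 (Set.Ioi 0))
        · have hc : Continuous fun s : ℝ => (1 - ρ/τ) • (s • x) + (ρ/τ) • (τ • w₀) := by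
            fun_prop
          have h0 : (1 - ρ/τ) • ((0:ℝ) • x) + (ρ/τ) • (τ • w₀) = ρ • w₀ := by
            rw [zero_smul, smul_zero, zero_add, smul_smul, div_mul_cancel₀ _ hτpos.ne']
          have ht : Filter.Tendsto (fun s : ℝ => (1 - ρ/τ) • (s • x) + (ρ/τ) • (τ • w₀))
              (nhdsWithin 0 (Set.Ioi 0)) (nhds ((1 - ρ/τ) • ((0:ℝ) • x) + (ρ/τ) • (τ • w₀))) :=
            (hc.tendsto 0).mono_left nhdsWithin_le_nhds
          rwa [h0] at ht
        · refine eventually_nhdsWithin_of_forall fun s hs => ?_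
          have m1 : s • x ∈ C := by
            refine ⟨fun i => ?_, houtx s hs⟩
            simpa [smul_eq_mul] using mul_nonneg (le_of_lt hs) (hx i).le
          have m2 : τ • w₀ ∈ C := by
            refine ⟨fun i => ?_, hτΩ⟩
            simpa [smul_eq_mul] using mul_nonneg hτpos.le (hw₀pos i).le
          exact hCsub (hconc m1 m2 (by linarith) hρτ0 (by ring))
      have hzF : ρ • w₀ ∈ frontier Ω := by
        rw [frontier_eq_closure_inter_closure]
        exact ⟨subset_closure hρΩ, hzcl⟩
      have hzpos : ∀ i, 0 < (ρ • w₀) i := fun i => by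
        simpa [smul_eq_mul] using mul_pos hρpos (hw₀pos i)
      have hlb := hfront_lb _ hzF hzpos
      have hsum2 : ∑ i, (v i:ℝ) * (ρ • w₀) i = ρ * B := by
        rw [hB, Finset.mul_sum]
        exact Finset.sum_congr rfl fun i _ => by simp [smul_eq_mul]; ring
      rw [hsum2] at hlb
      have hρB : ρ * B ≤ L / 2 := by
        have h1 : ρ ≤ L / (2*B) := min_le_right _ _
        have h2 : ρ * B ≤ (L / (2*B)) * B := mul_le_mul_of_nonneg_right h1 hBpos.le
        have h3 : (L / (2*B)) * B = L / 2 := by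
          field_simp
        linarith
      linarith
    · -- σ > 0 : exit point on the ray is a positive frontier point
      have hzcl : σ • x ∈ closure Ωᶜ := by
        apply mem_closure_of_tendsto (f := fun s : ℝ => s • x)
          (b := nhdsWithin σ (Set.Ioi σ))
        · have hc : Continuous fun s : ℝ => s • x := continuous_id.smul continuous_const
          exact (hc.tendsto σ).mono_left nhdsWithin_le_nhds
        · exact eventually_nhdsWithin_of_forall fun s hs => hout s hs
      have hzF : σ • x ∈ frontier Ω := by
        rw [frontier_eq_closure_inter_closure]
        exact ⟨subset_closure hσA.2, hzcl⟩
      have hzpos : ∀ i, 0 < (σ • x) i := fun i => by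
        simpa [smul_eq_mul] using mul_pos hσpos (hx i)
      have hlb := hfront_lb _ hzF hzpos
      have hsum2 : ∑ i, (v i:ℝ) * (σ • x) i = σ * ∑ i, (v i:ℝ) * x i := by
        rw [Finset.mul_sum]
        exact Finset.sum_congr rfl fun i _ => by simp [smul_eq_mul]; ring
      rw [hsum2] at hlb
      nlinarith [mul_nonneg (sub_nonneg.mpr hσ1.le) hS0]
  -- Part 1 : the simplex is contained in Ω
  have part1 : {x : Fin n → ℝ | (∀ i, 0 ≤ x i) ∧ ∑ i, (v i : ℝ) * x i ≤ L} ⊆ Ω := by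
    intro x hxmem
    obtain ⟨hx0, hxle⟩ := hxmem
    have hSv : (0:ℝ) < ∑ i, (v i:ℝ) :=
      Finset.sum_pos (fun i _ => hvpos i) ⟨⟨0, hn⟩, Finset.mem_univ _⟩
    set p : Fin n → ℝ := fun _ => L / (2 * ∑ i, (v i:ℝ)) with hp
    have hppos : ∀ i : Fin n, 0 < p i := fun i => by
      rw [hp]; exact div_pos hLpos (by linarith)
    have hvp : ∑ i, (v i:ℝ) * p i = L / 2 := by
      rw [hp]
      rw [← Finset.sum_mul]
      field_simp
    have hclΩ : x ∈ closure Ω := by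
      apply mem_closure_of_tendsto (f := fun θ : ℝ => (1-θ) • x + θ • p)
        (b := nhdsWithin 0 (Set.Ioi 0))
      · have hc : Continuous fun θ : ℝ => (1-θ) • x + θ • p := by fun_prop
        have h0 : (1-(0:ℝ)) • x + (0:ℝ) • p = x := by
          rw [zero_smul, add_zero, sub_zero, one_smul]
        have ht : Filter.Tendsto (fun θ : ℝ => (1-θ) • x + θ • p)
            (nhdsWithin 0 (Set.Ioi 0)) (nhds ((1-(0:ℝ)) • x + (0:ℝ) • p)) :=
          (hc.tendsto 0).mono_left nhdsWithin_le_nhds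
        rwa [h0] at ht
      · have hev1 : ∀ᶠ θ : ℝ in nhdsWithin 0 (Set.Ioi 0), θ < 1 :=
          Filter.Eventually.filter_mono nhdsWithin_le_nhds
            (eventually_lt_nhds (by norm_num : (0:ℝ) < 1))
        have hev2 : ∀ᶠ θ : ℝ in nhdsWithin 0 (Set.Ioi 0), θ ∈ Set.Ioi (0:ℝ) :=
          eventually_mem_nhdsWithin
        filter_upwards [hev1, hev2] with θ hθ1 hθ0
        refine key _ (fun i => ?_) ?_
        · have : ((1-θ) • x + θ • p) i = (1-θ) * x i + θ * p i := by
            simp [smul_eq_mul]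
          rw [this]
          have h1 : 0 ≤ (1-θ) * x i := mul_nonneg (by linarith) (hx0 i)
          have h2 : 0 < θ * p i := mul_pos hθ0 (hppos i)
          linarith
        · have hval : ∑ i, (v i:ℝ) * ((1-θ) • x + θ • p) i
              = (1-θ) * (∑ i, (v i:ℝ) * x i) + θ * (∑ i, (v i:ℝ) * p i) := by
            rw [Finset.mul_sum, Finset.mul_sum, ← Finset.sum_add_distrib]
            refine Finset.sum_congr rfl fun i _ => ?_
            simp [smul_eq_mul]; ring
          rw [hval, hvp]
          have hxle' : (1-θ) * (∑ i, (v i:ℝ) * x i) ≤ (1-θ) * L :=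
            mul_le_mul_of_nonneg_left hxle (by linarith)
          have : 0 < θ * (L/2) := mul_pos hθ0 (by positivity)
          nlinarith
    rwa [hΩclosed.closure_eq] at hclΩ
  -- Part 2 : the Mcap computation
  have hint : ∑ i, (v i:ℤ) = (k:ℤ) + n - 1 := by
    rw [← Nat.cast_sum, hsum]
    omega
  have part2 : Mcap n (fun i => L / (v i:ℝ)) k = L := by
    have hleast : IsLeast {T : ℝ | 0 < T ∧ (k:ℤ) ≤ ∑ i, ⌊T / (L / (v i:ℝ))⌋} L := by
      constructor
      · refine ⟨hLpos, ?_⟩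
        have h1 : ∀ i : Fin n, ⌊L / (L / (v i:ℝ))⌋ = (v i : ℤ) := by
          intro i
          have h2 : L / (L / (v i:ℝ)) = (v i:ℝ) := by
            rw [div_div_eq_mul_div, mul_comm, mul_div_assoc, div_self hLpos.ne', mul_one]
          rw [h2]
          exact_mod_cast Int.floor_natCast (v i)
        rw [Finset.sum_congr rfl fun i _ => h1 i, hint]
        omega
      · rintro T ⟨hT0, hTk⟩
        by_contra hLT
        push_neg at hLT
        have h1 : ∀ i : Fin n, ⌊T / (L / (v i:ℝ))⌋ ≤ (v i:ℤ) - 1 := by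
          intro i
          have h2 : T / (L / (v i:ℝ)) < ((v i : ℤ) : ℝ) := by
            push_cast
            rw [div_div_eq_mul_div, div_lt_iff₀ hLpos]
            nlinarith [mul_lt_mul_of_pos_right hLT (hvpos i)]
          have := Int.floor_lt.mpr h2
          omega
        have h3 : ∑ i, ⌊T / (L / (v i:ℝ))⌋ ≤ ∑ i, ((v i:ℤ) - 1) :=
          Finset.sum_le_sum fun i _ => h1 i
        have h4 : ∑ i, ((v i:ℤ) - 1) = (k:ℤ) - 1 := by
          rw [Finset.sum_sub_distrib, hint]
          simp
          omega
        omega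
    unfold Mcap
    exact hleast.csInf_eq
  have hellpos : ∀ i : Fin n, 0 < L / (v i:ℝ) := fun i => div_pos hLpos (hvpos i)
  have part2' : c k (ellipsoid n (fun i => L / (v i:ℝ))) = L := by
    rw [hell k _ hellpos, part2]
  refine ⟨part1, part2', ?_⟩
  have hsub : ellipsoid n (fun i => L / (v i:ℝ)) ⊆ toricDomain n Ω := by
    intro z hz
    have hz' : ∑ i, Real.pi * ‖z i‖ ^ 2 / (L / (v i:ℝ)) ≤ 1 := hz
    refine part1 ⟨fun i => by positivity, ?_⟩
    have heq : ∑ i, (v i:ℝ) * (Real.pi * ‖z i‖ ^ 2)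
        = L * ∑ i, Real.pi * ‖z i‖ ^ 2 / (L / (v i:ℝ)) := by
      rw [Finset.mul_sum]
      refine Finset.sum_congr rfl fun i _ => ?_
      have hv0 : ((v i:ℝ)) ≠ 0 := (hvpos i).ne'
      field_simp
    rw [heq]
    calc L * ∑ i, Real.pi * ‖z i‖ ^ 2 / (L / (v i:ℝ))
        ≤ L * 1 := mul_le_mul_of_nonneg_left hz' hLpos.le
      _ = L := mul_one L
  calc L = c k (ellipsoid n fun i => L / (v i:ℝ)) := part2'.symm
    _ ≤ c k (toricDomain n Ω) := hmono k _ _ hsub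
end
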